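/- There exists a constant C > 0 such that for all t > 0, ∫₀ᵗ (1 + t − s)^{-3/4} · ln(2 + 1/(t−s)) · (1+s)^{-3/2} ds ≤ C (1+t)^{-3/4}. -/

import Mathlib

open intervalIntegral MeasureTheory Set

lemma aux_key (y : ℝ) (hy : 0 ≤ y) : Real.log (1 + y) ≤ 2 * Real.sqrt y := by
  have h1 : Real.log (1 + y) = 2 * Real.log (Real.sqrt (1 + y)) := by
    rw [Real.log_sqrt (by linarith)]; ring
  have h2 : Real.log (Real.sqrt (1 + y)) ≤ Real.sqrt (1 + y) - 1 :=
    Real.log_le_sub_one_of_pos (Real.sqrt_pos.mpr (by linarith))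
  have h3 : Real.sqrt (1 + y) ≤ 1 + Real.sqrt y := by
    have := Real.sqrt_le_sqrt (show 1 + y ≤ (1 + Real.sqrt y) ^ 2 by
      nlinarith [Real.sq_sqrt hy, Real.sqrt_nonneg y])
    rwa [Real.sqrt_sq (by positivity)] at this
  linarith

lemma aux_log (u : ℝ) (hu : 0 ≤ u) :
    Real.log (2 + 1 / u) ≤ 1 + 2 * u ^ (-(1 : ℝ) / 2) := by
  have hlog2 : Real.log 2 ≤ 1 := (Real.log_le_sub_one_of_pos two_pos).trans (by norm_num)
  rcases eq_or_lt_of_le hu with h | h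
  · rw [← h]
    simp [Real.zero_rpow (show (-(1:ℝ)/2) ≠ 0 by norm_num)]
    linarith
  · have e1 : (2 : ℝ) + 1 / u = 2 * (1 + 1 / (2 * u)) := by field_simp
    rw [e1, Real.log_mul two_ne_zero (by positivity)]
    have hk := aux_key (1 / (2 * u)) (by positivity)
    have sq : Real.sqrt (1 / (2 * u)) ≤ Real.sqrt (1 / u) :=
      Real.sqrt_le_sqrt (by rw [one_div, one_div]; exact inv_anti₀ h (by linarith))
    have sr : Real.sqrt (1 / u) = u ^ (-(1 : ℝ) / 2) := by
      rw [one_div, Real.sqrt_inv, Real.sqrt_eq_rpow,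
        show (-(1:ℝ)/2) = -(1/2) by norm_num, Real.rpow_neg h.le]
    linarith

lemma aux_ratio {X Y e : ℝ} (hX : 0 < X) (hY : 0 < Y) (h : Y ≤ 2 * X) (he : e ≤ 0) :
    X ^ e ≤ 2 ^ (-e) * Y ^ e := by
  have h1 : X ^ e ≤ (Y / 2) ^ e :=
    Real.rpow_le_rpow_of_nonpos (by positivity) (by linarith) he
  have h2 : (Y / 2) ^ e = 2 ^ (-e) * Y ^ e := by
    rw [Real.div_rpow hY.le (by norm_num), Real.rpow_neg (by norm_num)]
    field_simp
  linarith [h1, h2.le]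

lemma aux_ratio34 {X Y : ℝ} (hX : 0 < X) (hY : 0 < Y) (h : Y ≤ 2 * X) :
    X ^ (-(3 : ℝ) / 4) ≤ 2 * Y ^ (-(3 : ℝ) / 4) := by
  refine (aux_ratio hX hY h (by norm_num)).trans ?_
  have h2 : (2 : ℝ) ^ (-(-(3 : ℝ) / 4)) ≤ 2 := by
    rw [show (-(-(3:ℝ)/4)) = 3/4 by norm_num]
    calc (2:ℝ) ^ ((3:ℝ)/4) ≤ 2 ^ (1:ℝ) :=
          Real.rpow_le_rpow_of_exponent_le one_le_two (by norm_num)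
      _ = 2 := Real.rpow_one 2
  exact mul_le_mul_of_nonneg_right h2 (Real.rpow_nonneg hY.le _)

lemma aux_ratio32 {X Y : ℝ} (hX : 0 < X) (hY : 0 < Y) (h : Y ≤ 2 * X) :
    X ^ (-(3 : ℝ) / 2) ≤ 4 * Y ^ (-(3 : ℝ) / 2) := by
  refine (aux_ratio hX hY h (by norm_num)).trans ?_
  have h2 : (2 : ℝ) ^ (-(-(3 : ℝ) / 2)) ≤ 4 := by
    rw [show (-(-(3:ℝ)/2)) = 3/2 by norm_num]
    calc (2:ℝ) ^ ((3:ℝ)/2) ≤ 2 ^ (2:ℝ) :=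
          Real.rpow_le_rpow_of_exponent_le one_le_two (by norm_num)
      _ = 4 := by rw [show (2:ℝ) = ((2:ℕ):ℝ) by norm_num, Real.rpow_natCast]; norm_num
  exact mul_le_mul_of_nonneg_right h2 (Real.rpow_nonneg hY.le _)

lemma aux_intJ {a b : ℝ} (h : ∀ x ∈ Set.uIcc a b, (0:ℝ) ≤ x) :
    IntervalIntegrable (fun s : ℝ => (1+s) ^ (-(3:ℝ)/2)) volume a b :=
  (ContinuousOn.rpow_const (by fun_prop) fun x hx =>
    Or.inl (by have := h x hx; intro hc; linarith)).intervalIntegrable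

lemma aux_J_le2 (a : ℝ) (ha : 0 ≤ a) :
    ∫ s in (0:ℝ)..a, (1+s) ^ (-(3:ℝ)/2) ≤ 2 := by
  have e : ∫ s in (0:ℝ)..a, (1+s) ^ (-(3:ℝ)/2) = ∫ x in (1:ℝ)..(1+a), x ^ (-(3:ℝ)/2) := by
    simpa using intervalIntegral.integral_comp_add_left (a := 0) (b := a) (fun x : ℝ => x ^ (-(3:ℝ)/2)) 1
  rw [e, integral_rpow (Or.inr ⟨by norm_num, by
    rw [Set.uIcc_of_le (by linarith)]
    rintro ⟨h1, -⟩; linarith⟩)]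
  rw [Real.one_rpow, div_le_iff_of_neg (by norm_num : (-(3:ℝ)/2 + 1) < 0)]
  have h0 : (0:ℝ) ≤ (1+a) ^ (-(3:ℝ)/2 + 1) := Real.rpow_nonneg (by linarith) _
  linarith

lemma aux_J_le_len (a : ℝ) (ha : 0 ≤ a) :
    ∫ s in (0:ℝ)..a, (1+s) ^ (-(3:ℝ)/2) ≤ a := by
  have h := intervalIntegral.integral_mono_on ha
    (aux_intJ (by rw [Set.uIcc_of_le ha]; exact fun x hx => hx.1))
    (_root_.intervalIntegrable_const (c := (1:ℝ)))
    (fun x hx => Real.rpow_le_one_of_one_le_of_nonpos (by linarith [hx.1]) (by norm_num))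
  simpa using h

lemma aux_J_nonneg (a : ℝ) (ha : 0 ≤ a) :
    0 ≤ ∫ s in (0:ℝ)..a, (1+s) ^ (-(3:ℝ)/2) :=
  intervalIntegral.integral_nonneg ha fun x hx => Real.rpow_nonneg (by linarith [hx.1]) _

lemma aux_P1 (a : ℝ) (ha : 0 ≤ a) :
    ∫ u in (0:ℝ)..a, (1+u) ^ (-(3:ℝ)/4) ≤ 4 * (1+a) ^ ((1:ℝ)/4) := by
  have e : ∫ u in (0:ℝ)..a, (1+u) ^ (-(3:ℝ)/4) = ∫ x in (1:ℝ)..(1+a), x ^ (-(3:ℝ)/4) := by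
    simpa using intervalIntegral.integral_comp_add_left (a := 0) (b := a) (fun x : ℝ => x ^ (-(3:ℝ)/4)) 1
  rw [e, integral_rpow (Or.inr ⟨by norm_num, by
    rw [Set.uIcc_of_le (by linarith)]
    rintro ⟨h1, -⟩; linarith⟩)]
  rw [Real.one_rpow, show (-(3:ℝ)/4 + 1) = (1:ℝ)/4 by norm_num,
    div_le_iff₀ (by norm_num : (0:ℝ) < (1:ℝ)/4)]
  have h0 : (0:ℝ) ≤ (1+a) ^ ((1:ℝ)/4) := Real.rpow_nonneg (by linarith) _
  linarith

lemma aux_Qint {b c : ℝ} (hb : 0 ≤ b) (hc : 0 ≤ c) :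
    IntervalIntegrable (fun u : ℝ => (1+u) ^ (-(3:ℝ)/4) * u ^ (-(1:ℝ)/2)) volume b c := by
  apply IntervalIntegrable.continuousOn_mul
    (intervalIntegrable_rpow' (by norm_num : (-1:ℝ) < -(1:ℝ)/2))
  exact ContinuousOn.rpow_const (by fun_prop) fun x hx =>
    Or.inl (by
      have h1 : (0:ℝ) ≤ b ⊓ c := le_inf hb hc
      have h2 := hx.1
      intro hcon; nlinarith)

lemma aux_Q1 (b : ℝ) (hb : 0 ≤ b) (hb1 : b ≤ 1) :
    ∫ u in (0:ℝ)..b, (1+u) ^ (-(3:ℝ)/4) * u ^ (-(1:ℝ)/2) ≤ 2 := by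
  have hmono := intervalIntegral.integral_mono_on hb (aux_Qint le_rfl hb)
    (intervalIntegrable_rpow' (by norm_num : (-1:ℝ) < -(1:ℝ)/2))
    (fun x hx => by
      have h1 : (1+x) ^ (-(3:ℝ)/4) ≤ 1 :=
        Real.rpow_le_one_of_one_le_of_nonpos (by linarith [hx.1]) (by norm_num)
      calc (1+x) ^ (-(3:ℝ)/4) * x ^ (-(1:ℝ)/2) ≤ 1 * x ^ (-(1:ℝ)/2) :=
            mul_le_mul_of_nonneg_right h1 (Real.rpow_nonneg hx.1 _)
        _ = x ^ (-(1:ℝ)/2) := one_mul _)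
  refine hmono.trans ?_
  rw [integral_rpow (Or.inl (by norm_num : (-1:ℝ) < -(1:ℝ)/2)),
    Real.zero_rpow (by norm_num : (-(1:ℝ)/2 + 1) ≠ 0)]
  have h2 : b ^ (-(1:ℝ)/2 + 1) ≤ 1 := Real.rpow_le_one hb hb1 (by norm_num)
  rw [div_le_iff₀ (by norm_num : (0:ℝ) < -(1:ℝ)/2 + 1)]
  linarith

lemma aux_Q (a : ℝ) (ha : 0 ≤ a) :
    ∫ u in (0:ℝ)..a, (1+u) ^ (-(3:ℝ)/4) * u ^ (-(1:ℝ)/2) ≤ 6 := by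
  rcases le_or_gt a 1 with h | h
  · exact (aux_Q1 a ha h).trans (by norm_num)
  · have hsplit := (intervalIntegral.integral_add_adjacent_intervals
      (aux_Qint (le_refl (0:ℝ)) zero_le_one) (aux_Qint zero_le_one (by linarith : (0:ℝ) ≤ a)))
    have h1 := aux_Q1 1 zero_le_one le_rfl
    have hcont : IntervalIntegrable (fun u : ℝ => u ^ (-(5:ℝ)/4)) volume 1 a := by
      apply ContinuousOn.intervalIntegrable
      exact ContinuousOn.rpow_const (by fun_prop) fun x hx => Or.inl (by
        rw [Set.uIcc_of_le (by linarith : (1:ℝ) ≤ a)] at hx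
        intro hcon; have := hx.1; linarith)
    have h2 : ∫ u in (1:ℝ)..a, (1+u) ^ (-(3:ℝ)/4) * u ^ (-(1:ℝ)/2)
        ≤ ∫ u in (1:ℝ)..a, u ^ (-(5:ℝ)/4) := by
      apply intervalIntegral.integral_mono_on (by linarith)
        (aux_Qint zero_le_one (by linarith)) hcont
      intro x hx
      have hx1 : (1:ℝ) ≤ x := hx.1
      have hb : (1+x) ^ (-(3:ℝ)/4) ≤ x ^ (-(3:ℝ)/4) :=
        Real.rpow_le_rpow_of_nonpos (by linarith) (by linarith) (by norm_num)
      calc (1+x) ^ (-(3:ℝ)/4) * x ^ (-(1:ℝ)/2) ≤ x ^ (-(3:ℝ)/4) * x ^ (-(1:ℝ)/2) :=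
            mul_le_mul_of_nonneg_right hb (Real.rpow_nonneg (by linarith) _)
        _ = x ^ (-(5:ℝ)/4) := by
            rw [← Real.rpow_add (by linarith : (0:ℝ) < x)]; norm_num
    have h3 : ∫ u in (1:ℝ)..a, u ^ (-(5:ℝ)/4) ≤ 4 := by
      rw [integral_rpow (Or.inr ⟨by norm_num, by
        rw [Set.uIcc_of_le (by linarith : (1:ℝ) ≤ a)]
        rintro ⟨hc, -⟩; linarith⟩)]
      rw [Real.one_rpow, div_le_iff_of_neg (by norm_num : (-(5:ℝ)/4 + 1) < 0)]
      have := Real.rpow_nonneg (by linarith : (0:ℝ) ≤ a) (-(5:ℝ)/4 + 1)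
      linarith
    linarith [hsplit]

set_option maxHeartbeats 1000000 in
/-- Convolution estimate with a logarithmic kernel:
`∫₀ᵗ (1+t-s)^{-3/4} ln(2 + 1/(t-s)) (1+s)^{-3/2} ds ≤ C (1+t)^{-3/4}`. -/
theorem stmt_8 :
    ∃ C > (0 : ℝ), ∀ t : ℝ, 0 < t →
      (∫ s in (0 : ℝ)..t,
          (1 + t - s) ^ (-(3 : ℝ) / 4) * Real.log (2 + 1 / (t - s)) *
            (1 + s) ^ (-(3 : ℝ) / 2)) ≤ C * (1 + t) ^ (-(3 : ℝ) / 4) := by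
  refine ⟨100, by norm_num, ?_⟩
  intro t ht
  have h1t : (0:ℝ) < 1 + t := by linarith
  have hrp : (0:ℝ) ≤ (1+t) ^ (-(3:ℝ)/4) := Real.rpow_nonneg h1t.le _
  by_cases hF : IntervalIntegrable
      (fun s => (1 + t - s) ^ (-(3 : ℝ) / 4) * Real.log (2 + 1 / (t - s)) *
        (1 + s) ^ (-(3 : ℝ) / 2)) volume 0 t
  swap
  · rw [intervalIntegral.integral_undef hF]; linarith
  have ht2 : (0:ℝ) ≤ t/2 := by linarith
  have ht2t : t/2 ≤ t := by linarith
  have h0t : (0:ℝ) ≤ t := ht.le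
  have hFsub1 : IntervalIntegrable
      (fun s => (1 + t - s) ^ (-(3 : ℝ) / 4) * Real.log (2 + 1 / (t - s)) *
        (1 + s) ^ (-(3 : ℝ) / 2)) volume 0 (t/2) :=
    hF.mono_set (by
      rw [Set.uIcc_of_le ht2, Set.uIcc_of_le h0t]
      exact Set.Icc_subset_Icc le_rfl ht2t)
  have hFsub2 : IntervalIntegrable
      (fun s => (1 + t - s) ^ (-(3 : ℝ) / 4) * Real.log (2 + 1 / (t - s)) *
        (1 + s) ^ (-(3 : ℝ) / 2)) volume (t/2) t :=
    hF.mono_set (by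
      rw [Set.uIcc_of_le ht2t, Set.uIcc_of_le h0t]
      exact Set.Icc_subset_Icc ht2 le_rfl)
  -- Region 1 : [0, t/2]
  have c1 : ContinuousOn (fun s : ℝ => (1+s) ^ (-(3:ℝ)/2)) (Set.uIcc 0 (t/2)) :=
    ContinuousOn.rpow_const (by fun_prop) fun x hx => Or.inl (by
      rw [Set.uIcc_of_le ht2] at hx; intro hc; linarith [hx.1])
  have c2 : ContinuousOn (fun s : ℝ => (t-s) ^ (-(1:ℝ)/2)) (Set.uIcc 0 (t/2)) :=
    ContinuousOn.rpow_const (by fun_prop) fun x hx => Or.inl (by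
      rw [Set.uIcc_of_le ht2] at hx; intro hc; linarith [hx.2])
  have hG1int : IntervalIntegrable (fun s : ℝ =>
      2*(1+t) ^ (-(3:ℝ)/4) * ((1+s) ^ (-(3:ℝ)/2) + 2*((t-s) ^ (-(1:ℝ)/2) * (1+s) ^ (-(3:ℝ)/2))))
      volume 0 (t/2) :=
    (continuousOn_const.mul (c1.add (continuousOn_const.mul (c2.mul c1)))).intervalIntegrable
  have hpt1 : ∀ s ∈ Set.Icc (0:ℝ) (t/2),
      (1 + t - s) ^ (-(3 : ℝ) / 4) * Real.log (2 + 1 / (t - s)) * (1 + s) ^ (-(3 : ℝ) / 2)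
      ≤ 2*(1+t) ^ (-(3:ℝ)/4) * ((1+s) ^ (-(3:ℝ)/2) + 2*((t-s) ^ (-(1:ℝ)/2) * (1+s) ^ (-(3:ℝ)/2))) := by
    intro s hs
    obtain ⟨hs0, hs2⟩ := hs
    have hts : 0 < t - s := by linarith
    have hA : (1+t-s) ^ (-(3:ℝ)/4) ≤ 2*(1+t) ^ (-(3:ℝ)/4) :=
      aux_ratio34 (X := 1+t-s) (Y := 1+t) (by linarith) h1t (by linarith)
    have hL := aux_log (t-s) hts.le
    have hx0 : 0 ≤ (t-s) ^ (-(1:ℝ)/2) := Real.rpow_nonneg hts.le _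
    have hL0 : 0 ≤ Real.log (2 + 1/(t-s)) := Real.log_nonneg (by
      have : 0 ≤ 1/(t-s) := by positivity
      linarith)
    have hB0 : 0 ≤ (1+s) ^ (-(3:ℝ)/2) := Real.rpow_nonneg (by linarith) _
    have hA0 : 0 ≤ (1+t-s) ^ (-(3:ℝ)/4) := Real.rpow_nonneg (by linarith) _
    have step : (1+t-s) ^ (-(3:ℝ)/4) * Real.log (2 + 1/(t-s)) * (1+s) ^ (-(3:ℝ)/2)
        ≤ (2*(1+t) ^ (-(3:ℝ)/4)) * (1 + 2*(t-s) ^ (-(1:ℝ)/2)) * (1+s) ^ (-(3:ℝ)/2) := by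
      apply mul_le_mul _ le_rfl hB0 (by
        apply mul_nonneg (by linarith) (by linarith))
      exact mul_le_mul hA hL hL0 (by linarith)
    calc (1+t-s) ^ (-(3:ℝ)/4) * Real.log (2 + 1/(t-s)) * (1+s) ^ (-(3:ℝ)/2)
        ≤ (2*(1+t) ^ (-(3:ℝ)/4)) * (1 + 2*(t-s) ^ (-(1:ℝ)/2)) * (1+s) ^ (-(3:ℝ)/2) := step
      _ = 2*(1+t) ^ (-(3:ℝ)/4) * ((1+s) ^ (-(3:ℝ)/2) + 2*((t-s) ^ (-(1:ℝ)/2) * (1+s) ^ (-(3:ℝ)/2))) := by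
          ring
  have hpart1 : (∫ s in (0:ℝ)..(t/2),
      (1 + t - s) ^ (-(3 : ℝ) / 4) * Real.log (2 + 1 / (t - s)) * (1 + s) ^ (-(3 : ℝ) / 2))
      ≤ 12 * (1+t) ^ (-(3:ℝ)/4) := by
    refine (intervalIntegral.integral_mono_on ht2 hFsub1 hG1int hpt1).trans ?_
    rw [intervalIntegral.integral_const_mul,
      intervalIntegral.integral_add (g := fun s : ℝ => 2*((t-s) ^ (-(1:ℝ)/2) * (1+s) ^ (-(3:ℝ)/2)))
        c1.intervalIntegrable
        ((continuousOn_const.mul (c2.mul c1)).intervalIntegrable),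
      intervalIntegral.integral_const_mul]
    have hJ : (∫ s in (0:ℝ)..(t/2), (1+s) ^ (-(3:ℝ)/2)) ≤ 2 := aux_J_le2 _ ht2
    have hJ0 : 0 ≤ ∫ s in (0:ℝ)..(t/2), (1+s) ^ (-(3:ℝ)/2) := aux_J_nonneg _ ht2
    have hKmono : (∫ s in (0:ℝ)..(t/2), (t-s) ^ (-(1:ℝ)/2) * (1+s) ^ (-(3:ℝ)/2))
        ≤ ∫ s in (0:ℝ)..(t/2), (t/2) ^ (-(1:ℝ)/2) * (1+s) ^ (-(3:ℝ)/2) := by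
      apply intervalIntegral.integral_mono_on ht2 ((c2.mul c1).intervalIntegrable)
        ((continuousOn_const.mul c1).intervalIntegrable)
      intro x hx
      exact mul_le_mul_of_nonneg_right
        (Real.rpow_le_rpow_of_nonpos (half_pos ht) (by linarith [hx.2]) (by norm_num))
        (Real.rpow_nonneg (by linarith [hx.1]) _)
    rw [intervalIntegral.integral_const_mul] at hKmono
    have hK : (∫ s in (0:ℝ)..(t/2), (t-s) ^ (-(1:ℝ)/2) * (1+s) ^ (-(3:ℝ)/2)) ≤ 2 := by
      rcases le_or_gt t 4 with h4 | h4
      · have hJlen : (∫ s in (0:ℝ)..(t/2), (1+s) ^ (-(3:ℝ)/2)) ≤ t/2 := aux_J_le_len _ ht2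
        have hm : (t/2) ^ (-(1:ℝ)/2) * (∫ s in (0:ℝ)..(t/2), (1+s) ^ (-(3:ℝ)/2))
            ≤ (t/2) ^ (-(1:ℝ)/2) * (t/2) :=
          mul_le_mul_of_nonneg_left hJlen (Real.rpow_nonneg (by linarith) _)
        have heq : (t/2) ^ ((1:ℝ)/2) = (t/2) ^ (-(1:ℝ)/2) * (t/2) := by
          rw [show ((1:ℝ)/2) = -(1:ℝ)/2 + 1 by norm_num, Real.rpow_add (half_pos ht),
            Real.rpow_one]
        have hle2 : (t/2) ^ ((1:ℝ)/2) ≤ 2 := by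
          calc (t/2) ^ ((1:ℝ)/2) ≤ (4:ℝ) ^ ((1:ℝ)/2) :=
                Real.rpow_le_rpow (by linarith) (by linarith) (by norm_num)
            _ = 2 := by
                rw [show (4:ℝ) = (2:ℝ)^(2:ℕ) by norm_num, ← Real.rpow_natCast 2 2,
                  ← Real.rpow_mul (by norm_num)]
                norm_num
        linarith
      · have hone : (t/2) ^ (-(1:ℝ)/2) ≤ 1 :=
          Real.rpow_le_one_of_one_le_of_nonpos (by linarith) (by norm_num)
        have hx0 : 0 ≤ (t/2) ^ (-(1:ℝ)/2) := Real.rpow_nonneg (by linarith) _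
        nlinarith
    have hc0 : (0:ℝ) ≤ 2*(1+t) ^ (-(3:ℝ)/4) := by linarith
    have := mul_le_mul_of_nonneg_left
      (show (∫ s in (0:ℝ)..(t/2), (1+s) ^ (-(3:ℝ)/2))
          + 2 * (∫ s in (0:ℝ)..(t/2), (t-s) ^ (-(1:ℝ)/2) * (1+s) ^ (-(3:ℝ)/2)) ≤ 6 by linarith)
      hc0
    nlinarith
  -- Region 2 : [t/2, t]
  have c3 : ContinuousOn (fun s : ℝ => (1+t-s) ^ (-(3:ℝ)/4)) (Set.uIcc (t/2) t) :=
    ContinuousOn.rpow_const (by fun_prop) fun x hx => Or.inl (by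
      rw [Set.uIcc_of_le ht2t] at hx; intro hc; linarith [hx.2])
  have hp2 : IntervalIntegrable (fun s : ℝ => (t-s) ^ (-(1:ℝ)/2)) volume (t/2) t := by
    have h := (intervalIntegrable_rpow' (a := t/2) (b := 0)
      (by norm_num : (-1:ℝ) < -(1:ℝ)/2)).comp_sub_left t
    rw [show t - t/2 = t/2 by ring, sub_zero] at h
    exact h
  have hq : IntervalIntegrable (fun s : ℝ => (1+t-s) ^ (-(3:ℝ)/4) * (t-s) ^ (-(1:ℝ)/2))
      volume (t/2) t := hp2.continuousOn_mul c3
  have hG2int : IntervalIntegrable (fun s : ℝ =>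
      4*(1+t) ^ (-(3:ℝ)/2) * ((1+t-s) ^ (-(3:ℝ)/4)
        + 2*((1+t-s) ^ (-(3:ℝ)/4) * (t-s) ^ (-(1:ℝ)/2)))) volume (t/2) t :=
    (c3.intervalIntegrable.add (hq.const_mul 2)).const_mul _
  have hpt2 : ∀ s ∈ Set.Icc (t/2) t,
      (1 + t - s) ^ (-(3 : ℝ) / 4) * Real.log (2 + 1 / (t - s)) * (1 + s) ^ (-(3 : ℝ) / 2)
      ≤ 4*(1+t) ^ (-(3:ℝ)/2) * ((1+t-s) ^ (-(3:ℝ)/4)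
        + 2*((1+t-s) ^ (-(3:ℝ)/4) * (t-s) ^ (-(1:ℝ)/2))) := by
    intro s hs
    obtain ⟨hs1, hs2⟩ := hs
    have hts0 : (0:ℝ) ≤ t - s := by linarith
    have hA0 : 0 ≤ (1+t-s) ^ (-(3:ℝ)/4) := Real.rpow_nonneg (by linarith) _
    have hx0 : 0 ≤ (t-s) ^ (-(1:ℝ)/2) := Real.rpow_nonneg hts0 _
    have hB : (1+s) ^ (-(3:ℝ)/2) ≤ 4*(1+t) ^ (-(3:ℝ)/2) :=
      aux_ratio32 (X := 1+s) (Y := 1+t) (by linarith) h1t (by linarith)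
    have hL := aux_log (t-s) hts0
    have hL0 : 0 ≤ Real.log (2 + 1/(t-s)) := Real.log_nonneg (by
      have h9 : (0:ℝ) ≤ 1/(t-s) := by positivity
      linarith)
    have hB0 : 0 ≤ (1+s) ^ (-(3:ℝ)/2) := Real.rpow_nonneg (by linarith) _
    have step : (1+t-s) ^ (-(3:ℝ)/4) * Real.log (2 + 1/(t-s)) * (1+s) ^ (-(3:ℝ)/2)
        ≤ ((1+t-s) ^ (-(3:ℝ)/4) * (1 + 2*(t-s) ^ (-(1:ℝ)/2))) * (4*(1+t) ^ (-(3:ℝ)/2)) := by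
      apply mul_le_mul (mul_le_mul_of_nonneg_left hL hA0) hB hB0
      apply mul_nonneg hA0 (by linarith)
    calc (1+t-s) ^ (-(3:ℝ)/4) * Real.log (2 + 1/(t-s)) * (1+s) ^ (-(3:ℝ)/2)
        ≤ ((1+t-s) ^ (-(3:ℝ)/4) * (1 + 2*(t-s) ^ (-(1:ℝ)/2))) * (4*(1+t) ^ (-(3:ℝ)/2)) := step
      _ = 4*(1+t) ^ (-(3:ℝ)/2) * ((1+t-s) ^ (-(3:ℝ)/4)
            + 2*((1+t-s) ^ (-(3:ℝ)/4) * (t-s) ^ (-(1:ℝ)/2))) := by ring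
  have hpart2 : (∫ s in (t/2)..t,
      (1 + t - s) ^ (-(3 : ℝ) / 4) * Real.log (2 + 1 / (t - s)) * (1 + s) ^ (-(3 : ℝ) / 2))
      ≤ 64 * (1+t) ^ (-(3:ℝ)/4) := by
    refine (intervalIntegral.integral_mono_on ht2t hFsub2 hG2int hpt2).trans ?_
    rw [intervalIntegral.integral_const_mul,
      intervalIntegral.integral_add c3.intervalIntegrable (hq.const_mul 2),
      intervalIntegral.integral_const_mul]
    have hP1 : (∫ s in (t/2)..t, (1+t-s) ^ (-(3:ℝ)/4)) ≤ 4*(1+t) ^ ((1:ℝ)/4) := by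
      have e := intervalIntegral.integral_comp_sub_left (a := t/2) (b := t)
        (fun u : ℝ => (1+u) ^ (-(3:ℝ)/4)) t
      rw [sub_self, show t - t/2 = t/2 by ring] at e
      simp only [← add_sub_assoc] at e
      rw [e]
      refine (aux_P1 (t/2) ht2).trans ?_
      have := Real.rpow_le_rpow (by linarith : (0:ℝ) ≤ 1 + t/2)
        (by linarith : 1 + t/2 ≤ 1 + t) (by norm_num : (0:ℝ) ≤ (1:ℝ)/4)
      linarith
    have hP2 : (∫ s in (t/2)..t, (1+t-s) ^ (-(3:ℝ)/4) * (t-s) ^ (-(1:ℝ)/2)) ≤ 6 := by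
      have e := intervalIntegral.integral_comp_sub_left (a := t/2) (b := t)
        (fun u : ℝ => (1+u) ^ (-(3:ℝ)/4) * u ^ (-(1:ℝ)/2)) t
      rw [sub_self, show t - t/2 = t/2 by ring] at e
      simp only [← add_sub_assoc] at e
      rw [e]
      exact aux_Q (t/2) ht2
    have hP10 : 0 ≤ ∫ s in (t/2)..t, (1+t-s) ^ (-(3:ℝ)/4) :=
      intervalIntegral.integral_nonneg ht2t fun x hx => Real.rpow_nonneg (by linarith [hx.2]) _
    have hP20 : 0 ≤ ∫ s in (t/2)..t, (1+t-s) ^ (-(3:ℝ)/4) * (t-s) ^ (-(1:ℝ)/2) :=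
      intervalIntegral.integral_nonneg ht2t fun x hx =>
        mul_nonneg (Real.rpow_nonneg (by linarith [hx.2]) _)
          (Real.rpow_nonneg (by linarith [hx.2]) _)
    have hc32 : (0:ℝ) ≤ (1+t) ^ (-(3:ℝ)/2) := Real.rpow_nonneg h1t.le _
    have hkey : 4*(1+t) ^ (-(3:ℝ)/2) * ((∫ s in (t/2)..t, (1+t-s) ^ (-(3:ℝ)/4))
          + 2 * ∫ s in (t/2)..t, (1+t-s) ^ (-(3:ℝ)/4) * (t-s) ^ (-(1:ℝ)/2))
        ≤ 4*(1+t) ^ (-(3:ℝ)/2) * (4*(1+t) ^ ((1:ℝ)/4) + 12) :=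
      mul_le_mul_of_nonneg_left (by linarith) (by linarith)
    have hmul : (1+t) ^ (-(3:ℝ)/2) * (1+t) ^ ((1:ℝ)/4) = (1+t) ^ (-(5:ℝ)/4) := by
      rw [← Real.rpow_add h1t]; norm_num
    have hb1 : (1+t) ^ (-(5:ℝ)/4) ≤ (1+t) ^ (-(3:ℝ)/4) :=
      Real.rpow_le_rpow_of_exponent_le (by linarith) (by norm_num)
    have hb2 : (1+t) ^ (-(3:ℝ)/2) ≤ (1+t) ^ (-(3:ℝ)/4) :=
      Real.rpow_le_rpow_of_exponent_le (by linarith) (by norm_num)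
    nlinarith [hkey, hmul, hb1, hb2, hc32]
  rw [← intervalIntegral.integral_add_adjacent_intervals hFsub1 hFsub2]
  linarith
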